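/- Let R_H and R_L be two N_t × N_t complex Hermitian positive semidefinite matrices with tr(R_H) = tr(R_L) = N_t, with eigenvalues sorted in decreasing order λ^H_1 ≥ ⋯ ≥ λ^H_{N_t} and λ^L_1 ≥ ⋯ ≥ λ^L_{N_t}, such that the eigenvalue vector of R_H majorizes that of R_L (i.e., Σ_{t=1}^{k} λ^H_t ≥ Σ_{t=1}^{k} λ^L_t for all 1 ≤ k ≤ N_t, with equality at k = N_t). Let X_H = √ρ · U_{H,[1:T]} and X_L = √ρ · U_{L,[1:T]} be the optimal training matrices built from the first T eigenvectors of R_H and R_L respectively. Then MSE_{R_H}(X_H) ≤ MSE_{R_L}(X_L); equivalently, Σ_{t=1}^{T} ρ (λ^H_t)² / (ρ λ^H_t + 1) ≥ Σ_{t=1}^{T} ρ (λ^L_t)² / (ρ λ^L_t + 1). -/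

import Mathlib

open Matrix BigOperators Finset

def Emat (Nt T : ℕ) (hTN : T ≤ Nt) : Matrix (Fin Nt) (Fin T) ℂ :=
  fun j t => if j = Fin.castLE hTN t then 1 else 0

lemma mul_Emat {Nt T : ℕ} (hTN : T ≤ Nt) {m : Type*} [Fintype m]
    (A : Matrix m (Fin Nt) ℂ) (i : m) (t : Fin T) :
    (A * Emat Nt T hTN) i t = A i (Fin.castLE hTN t) := by
  simp [Emat, Matrix.mul_apply]

lemma Emat_mul {Nt T : ℕ} (hTN : T ≤ Nt) {m : Type*} [Fintype m]
    (A : Matrix (Fin Nt) m ℂ) (t : Fin T) (j : m) :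
    ((Emat Nt T hTN)ᴴ * A) t j = A (Fin.castLE hTN t) j := by
  simp [Emat, Matrix.mul_apply, Matrix.conjTranspose_apply, apply_ite]

lemma EDE {Nt T : ℕ} (hTN : T ≤ Nt) (v : Fin Nt → ℂ) :
    (Emat Nt T hTN)ᴴ * Matrix.diagonal v * Emat Nt T hTN
      = Matrix.diagonal (fun t => v (Fin.castLE hTN t)) := by
  ext s t
  rw [mul_Emat hTN, Emat_mul hTN]
  by_cases h : s = t
  · subst h; simp
  · rw [Matrix.diagonal_apply_ne _ (fun hc => h (Fin.castLE_injective hTN hc)),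
      Matrix.diagonal_apply_ne _ h]

lemma trace_key (Nt T : ℕ) (hTN : T ≤ Nt) (ρ : ℝ) (hρ : 0 < ρ)
    (U : Matrix (Fin Nt) (Fin Nt) ℂ) (hU1 : Uᴴ * U = 1)
    (lam : Fin Nt → ℝ) (hnn : ∀ t, 0 ≤ lam t)
    (R : Matrix (Fin Nt) (Fin Nt) ℂ)
    (hR : R = U * Matrix.diagonal (fun t => (lam t : ℂ)) * Uᴴ)
    (X : Matrix (Fin Nt) (Fin T) ℂ)
    (hX : X = fun i t => (Real.sqrt ρ : ℂ) * U i (Fin.castLE hTN t)) :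
    (R - R * X * (1 + Xᴴ * R * X)⁻¹ * Xᴴ * R).trace
      = ((∑ i : Fin Nt, lam i
          - ρ * ∑ t : Fin T, lam (Fin.castLE hTN t) ^ 2
              * (ρ * lam (Fin.castLE hTN t) + 1)⁻¹ : ℝ) : ℂ) := by
  set E := Emat Nt T hTN with hE
  set D := Matrix.diagonal (fun t => (lam t : ℂ)) with hD
  have hcancel : ∀ {p q : Type} [Fintype p] [Fintype q]
      (A : Matrix p (Fin Nt) ℂ) (B : Matrix (Fin Nt) q ℂ),
      A * Uᴴ * (U * B) = A * B := by
    intro p q _ _ A B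
    rw [Matrix.mul_assoc A, ← Matrix.mul_assoc Uᴴ, hU1, Matrix.one_mul]
  have hXE : X = (Real.sqrt ρ : ℂ) • (U * E) := by
    ext i t
    rw [hX]
    simp only [Matrix.smul_apply, hE, mul_Emat hTN, smul_eq_mul]
  have hXH : Xᴴ = (Real.sqrt ρ : ℂ) • (Eᴴ * Uᴴ) := by
    rw [hXE, Matrix.conjTranspose_smul, Matrix.conjTranspose_mul]
    congr 1
    exact Complex.conj_ofReal _
  have hρs : (Real.sqrt ρ : ℂ) * (Real.sqrt ρ : ℂ) = (ρ : ℂ) := by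
    rw [← Complex.ofReal_mul, Real.mul_self_sqrt hρ.le]
  -- R * X and Xᴴ * R
  have hRX : R * X = (Real.sqrt ρ : ℂ) • (U * D * E) := by
    rw [hR, hXE, Matrix.mul_smul]
    congr 1
    exact hcancel (U * D) E
  have hXR : Xᴴ * R = (Real.sqrt ρ : ℂ) • (Eᴴ * D * Uᴴ) := by
    rw [hR, hXH, Matrix.smul_mul]
    congr 1
    calc Eᴴ * Uᴴ * (U * D * Uᴴ) = Eᴴ * Uᴴ * (U * (D * Uᴴ)) := by
          rw [Matrix.mul_assoc U D]
      _ = Eᴴ * (D * Uᴴ) := hcancel Eᴴ (D * Uᴴ)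
      _ = Eᴴ * D * Uᴴ := by rw [Matrix.mul_assoc]
  -- Xᴴ R X
  have hXRX : Xᴴ * R * X = Matrix.diagonal
      (fun t => ((ρ * lam (Fin.castLE hTN t) : ℝ) : ℂ)) := by
    rw [hXR, hXE, Matrix.smul_mul, Matrix.mul_smul, smul_smul, hρs]
    have : Eᴴ * D * Uᴴ * (U * E) = Eᴴ * D * E := hcancel (Eᴴ * D) E
    rw [this, hD, EDE hTN]
    ext i j
    by_cases h : i = j
    · subst h
      simp only [Matrix.smul_apply, Matrix.diagonal_apply_eq, smul_eq_mul]
      push_cast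
      ring
    · simp [Matrix.diagonal_apply_ne _ h]
  have hone : (1 : Matrix (Fin T) (Fin T) ℂ) + Xᴴ * R * X
      = Matrix.diagonal (fun t => ((ρ * lam (Fin.castLE hTN t) + 1 : ℝ) : ℂ)) := by
    rw [hXRX, ← Matrix.diagonal_one, Matrix.diagonal_add]
    exact congrArg Matrix.diagonal (funext fun t => by push_cast; ring)
  have hne : ∀ t : Fin T, ((ρ * lam (Fin.castLE hTN t) + 1 : ℝ) : ℂ) ≠ 0 := by
    intro t
    have : (0:ℝ) < ρ * lam (Fin.castLE hTN t) + 1 := by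
      have := mul_nonneg hρ.le (hnn (Fin.castLE hTN t)); linarith
    exact_mod_cast this.ne'
  have hinv : (1 + Xᴴ * R * X)⁻¹ = Matrix.diagonal
      (fun t => (((ρ * lam (Fin.castLE hTN t) + 1 : ℝ) : ℂ))⁻¹) := by
    apply Matrix.inv_eq_right_inv
    rw [hone, Matrix.diagonal_mul_diagonal, ← Matrix.diagonal_one]
    exact congrArg Matrix.diagonal (funext fun t => mul_inv_cancel₀ (hne t))
  -- the big product
  set M := Matrix.diagonal
    (fun t => (((ρ * lam (Fin.castLE hTN t) + 1 : ℝ) : ℂ))⁻¹) with hM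
  have hbig : R * X * (1 + Xᴴ * R * X)⁻¹ * Xᴴ * R
      = (ρ : ℂ) • (U * D * E * M * (Eᴴ * D * Uᴴ)) := by
    rw [hinv, hRX]
    have h0 : (Real.sqrt ρ : ℂ) • (U * D * E) * M * Xᴴ * R
        = (Real.sqrt ρ : ℂ) • (U * D * E) * M * (Xᴴ * R) := by
      rw [Matrix.mul_assoc]
    rw [h0, hXR, Matrix.smul_mul, Matrix.smul_mul, Matrix.mul_smul, smul_smul, hρs]
  have hDD : Eᴴ * D * (D * E) = Eᴴ * Matrix.diagonal
      (fun i => (lam i : ℂ) * (lam i : ℂ)) * E := by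
    rw [← Matrix.mul_assoc, Matrix.mul_assoc Eᴴ D D, hD,
      Matrix.diagonal_mul_diagonal]
  have htrbig : (R * X * (1 + Xᴴ * R * X)⁻¹ * Xᴴ * R).trace
      = (ρ : ℂ) * ∑ t : Fin T, (lam (Fin.castLE hTN t) : ℂ) * (lam (Fin.castLE hTN t) : ℂ)
          * (((ρ * lam (Fin.castLE hTN t) + 1 : ℝ) : ℂ))⁻¹ := by
    rw [hbig, Matrix.trace_smul, smul_eq_mul]
    congr 1
    rw [Matrix.trace_mul_comm (U * D * E * M) (Eᴴ * D * Uᴴ)]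
    have h1 : Eᴴ * D * Uᴴ * (U * D * E * M) = Eᴴ * D * Uᴴ * (U * (D * E * M)) := by
      rw [Matrix.mul_assoc U D E, Matrix.mul_assoc U (D * E) M]
    rw [h1, hcancel (Eᴴ * D) (D * E * M), ← Matrix.mul_assoc (Eᴴ * D) (D * E) M,
      hDD, EDE hTN, hM, Matrix.diagonal_mul_diagonal, Matrix.trace_diagonal]
  have htrR : R.trace = ∑ i : Fin Nt, ((lam i : ℂ)) := by
    rw [hR, Matrix.trace_mul_cycle, hU1, Matrix.one_mul, hD, Matrix.trace_diagonal]
  rw [Matrix.trace_sub, htrR, htrbig]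
  push_cast
  congr 2
  apply Finset.sum_congr rfl
  intro x _
  ring

lemma abel_aux (s d : ℕ → ℝ) (hs : Antitone s) (T : ℕ)
    (hD : ∀ k, k ≤ T → 0 ≤ ∑ t ∈ Finset.range k, d t) :
    ∀ k, k ≤ T → s k * ∑ t ∈ Finset.range k, d t ≤ ∑ t ∈ Finset.range k, s t * d t := by
  intro k
  induction k with
  | zero => simp
  | succ k ih =>
    intro hk
    have h1 := ih (Nat.le_of_succ_le hk)
    have h2 := hD (k+1) hk
    rw [Finset.sum_range_succ, Finset.sum_range_succ]
    have h3 : s (k+1) * (∑ t ∈ Finset.range k, d t + d k)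
        ≤ s k * (∑ t ∈ Finset.range k, d t + d k) := by
      apply mul_le_mul_of_nonneg_right (hs (Nat.le_succ k))
      rw [← Finset.sum_range_succ]; exact h2
    nlinarith [h3, h1]

lemma abel_nonneg (s d : ℕ → ℝ) (hs : Antitone s) (hsn : ∀ i, 0 ≤ s i) (T : ℕ)
    (hD : ∀ k, k ≤ T → 0 ≤ ∑ t ∈ Finset.range k, d t) :
    0 ≤ ∑ t ∈ Finset.range T, s t * d t := by
  have := abel_aux s d hs T hD T le_rfl
  have := mul_nonneg (hsn T) (hD T le_rfl)
  linarith

lemma sum_filter_eq_sum_range {Nt : ℕ} (lam : Fin Nt → ℝ) (f : ℕ → ℝ)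
    (hf : ∀ t : Fin Nt, f t.1 = lam t) (k : ℕ) (hk : k ≤ Nt) :
    ∑ t ∈ Finset.univ.filter (fun t : Fin Nt => (t : ℕ) < k), lam t
      = ∑ t ∈ Finset.range k, f t := by
  rw [Finset.sum_filter]
  have : ∀ t : Fin Nt, (if (t : ℕ) < k then lam t else 0)
      = (fun n => if n < k then f n else 0) t.1 := by
    intro t; simp only [hf]
  rw [Finset.sum_congr rfl (fun t _ => this t),
    Fin.sum_univ_eq_sum_range (fun n => if n < k then f n else 0) Nt,
    ← Finset.sum_filter]
  congr 1
  ext x; simp; omega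

lemma scalar_ineq (Nt T : ℕ) (hTN : T ≤ Nt) (ρ : ℝ) (hρ : 0 < ρ)
    (lamH lamL : Fin Nt → ℝ)
    (hHnn : ∀ t, 0 ≤ lamH t) (hLnn : ∀ t, 0 ≤ lamL t)
    (hHmono : Antitone lamH) (hLmono : Antitone lamL)
    (hmaj : ∀ k : ℕ, k ≤ Nt →
      ∑ t ∈ Finset.univ.filter (fun t : Fin Nt => (t : ℕ) < k), lamL t
        ≤ ∑ t ∈ Finset.univ.filter (fun t : Fin Nt => (t : ℕ) < k), lamH t) :
    ∑ t : Fin T, ρ * lamL (Fin.castLE hTN t) ^ 2 / (ρ * lamL (Fin.castLE hTN t) + 1)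
      ≤ ∑ t : Fin T, ρ * lamH (Fin.castLE hTN t) ^ 2 / (ρ * lamH (Fin.castLE hTN t) + 1) := by
  set a : ℕ → ℝ := fun i => if h : i < Nt then lamH ⟨i, h⟩ else 0 with ha
  set b : ℕ → ℝ := fun i => if h : i < Nt then lamL ⟨i, h⟩ else 0 with hb
  have haval : ∀ t : Fin Nt, a t.1 = lamH t := by intro t; simp [ha, t.isLt]
  have hbval : ∀ t : Fin Nt, b t.1 = lamL t := by intro t; simp [hb, t.isLt]
  have hann : ∀ i, 0 ≤ a i := by
    intro i; simp only [ha]; split <;> simp [hHnn]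
  have hbnn : ∀ i, 0 ≤ b i := by
    intro i; simp only [hb]; split <;> simp [hLnn]
  have haanti : Antitone a := by
    intro m n hmn
    simp only [ha]
    by_cases hn : n < Nt
    · have hm : m < Nt := lt_of_le_of_lt hmn hn
      rw [dif_pos hn, dif_pos hm]
      exact hHmono (by exact hmn)
    · rw [dif_neg hn]
      split
      · exact hHnn _
      · exact le_rfl
  have hbanti : Antitone b := by
    intro m n hmn
    simp only [hb]
    by_cases hn : n < Nt
    · have hm : m < Nt := lt_of_le_of_lt hmn hn
      rw [dif_pos hn, dif_pos hm]
      exact hLmono (by exact hmn)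
    · rw [dif_neg hn]
      split
      · exact hLnn _
      · exact le_rfl
  set s : ℕ → ℝ := fun i => 1 - ((ρ * a i + 1) * (ρ * b i + 1))⁻¹ with hsdef
  set d : ℕ → ℝ := fun i => a i - b i with hddef
  have hsanti : Antitone s := by
    intro m n hmn
    simp only [hsdef]
    have e1 : 0 ≤ ρ * a n := mul_nonneg hρ.le (hann n)
    have e2 : 0 ≤ ρ * b n := mul_nonneg hρ.le (hbnn n)
    have e3 : 0 ≤ ρ * a m := le_trans e1 (mul_le_mul_of_nonneg_left (haanti hmn) hρ.le)
    have h1 : (0:ℝ) < (ρ * a n + 1) * (ρ * b n + 1) := by positivity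
    have h2 : (ρ * a n + 1) * (ρ * b n + 1) ≤ (ρ * a m + 1) * (ρ * b m + 1) :=
      mul_le_mul (by linarith [mul_le_mul_of_nonneg_left (haanti hmn) hρ.le])
        (by linarith [mul_le_mul_of_nonneg_left (hbanti hmn) hρ.le])
        (by linarith) (by linarith)
    have := inv_anti₀ h1 h2
    linarith
  have hsnn : ∀ i, 0 ≤ s i := by
    intro i
    simp only [hsdef]
    have e1 : 0 ≤ ρ * a i := mul_nonneg hρ.le (hann i)
    have e2 : 0 ≤ ρ * b i := mul_nonneg hρ.le (hbnn i)
    have h1 : (1:ℝ) ≤ (ρ * a i + 1) * (ρ * b i + 1) := by nlinarith [mul_nonneg e1 e2]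
    have h0 : (0:ℝ) < (ρ * a i + 1) * (ρ * b i + 1) := by linarith
    have := inv_le_one_of_one_le₀ h1
    linarith
  have hid : ∀ i, ρ * a i ^ 2 / (ρ * a i + 1) - ρ * b i ^ 2 / (ρ * b i + 1)
      = s i * d i := by
    intro i
    have h1 : ρ * a i + 1 ≠ 0 := by
      have := mul_nonneg hρ.le (hann i); linarith
    have h2 : ρ * b i + 1 ≠ 0 := by
      have := mul_nonneg hρ.le (hbnn i); linarith
    simp only [hsdef, hddef]
    field_simp
    ring
  have hD : ∀ k, k ≤ T → 0 ≤ ∑ t ∈ Finset.range k, d t := by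
    intro k hk
    have hkN : k ≤ Nt := le_trans hk hTN
    have : ∑ t ∈ Finset.range k, d t
        = (∑ t ∈ Finset.univ.filter (fun t : Fin Nt => (t : ℕ) < k), lamH t)
          - (∑ t ∈ Finset.univ.filter (fun t : Fin Nt => (t : ℕ) < k), lamL t) := by
      rw [sum_filter_eq_sum_range lamH a haval k hkN,
        sum_filter_eq_sum_range lamL b hbval k hkN]
      simp only [hddef]
      rw [Finset.sum_sub_distrib]
    rw [this]
    linarith [hmaj k hkN]
  have key : 0 ≤ ∑ t ∈ Finset.range T, s t * d t := abel_nonneg s d hsanti hsnn T hD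
  have hconv : ∀ (lam : Fin Nt → ℝ) (f : ℕ → ℝ), (∀ t : Fin Nt, f t.1 = lam t) →
      ∑ t : Fin T, ρ * lam (Fin.castLE hTN t) ^ 2 / (ρ * lam (Fin.castLE hTN t) + 1)
        = ∑ t ∈ Finset.range T, ρ * f t ^ 2 / (ρ * f t + 1) := by
    intro lam f hf
    rw [← Fin.sum_univ_eq_sum_range (fun n => ρ * f n ^ 2 / (ρ * f n + 1)) T]
    apply Finset.sum_congr rfl
    intro t _
    have : f (t : ℕ) = lam (Fin.castLE hTN t) := hf (Fin.castLE hTN t)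
    rw [this]
  rw [hconv lamH a haval, hconv lamL b hbval]
  have : ∑ t ∈ Finset.range T, ρ * a t ^ 2 / (ρ * a t + 1)
      - ∑ t ∈ Finset.range T, ρ * b t ^ 2 / (ρ * b t + 1)
      = ∑ t ∈ Finset.range T, s t * d t := by
    rw [← Finset.sum_sub_distrib]
    exact Finset.sum_congr rfl (fun i _ => hid i)
  linarith

/-- Lemma 2: if the decreasing eigenvalue vector of `R_H` majorizes that of
`R_L` (both with trace `N_t`), then the optimal-training MSE under `R_H` is at most that
under `R_L`; equivalently the corresponding eigenvalue sums are ordered. -/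
theorem stmt_2 (Nt T : ℕ) (hNt : 0 < Nt) (hT : 0 < T) (hTN : T ≤ Nt)
    (ρ : ℝ) (hρ : 0 < ρ)
    (UH UL : Matrix (Fin Nt) (Fin Nt) ℂ)
    (hUH1 : UHᴴ * UH = 1) (hUH2 : UH * UHᴴ = 1)
    (hUL1 : ULᴴ * UL = 1) (hUL2 : UL * ULᴴ = 1)
    (lamH lamL : Fin Nt → ℝ)
    (hHnn : ∀ t, 0 ≤ lamH t) (hLnn : ∀ t, 0 ≤ lamL t)
    (hHmono : Antitone lamH) (hLmono : Antitone lamL)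
    (RH RL : Matrix (Fin Nt) (Fin Nt) ℂ)
    (hRH : RH = UH * Matrix.diagonal (fun t => (lamH t : ℂ)) * UHᴴ)
    (hRL : RL = UL * Matrix.diagonal (fun t => (lamL t : ℂ)) * ULᴴ)
    (htrH : ∑ t : Fin Nt, lamH t = (Nt : ℝ))
    (htrL : ∑ t : Fin Nt, lamL t = (Nt : ℝ))
    (hmaj : ∀ k : ℕ, k ≤ Nt →
      ∑ t ∈ Finset.univ.filter (fun t : Fin Nt => (t : ℕ) < k), lamL t
        ≤ ∑ t ∈ Finset.univ.filter (fun t : Fin Nt => (t : ℕ) < k), lamH t)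
    (XH XL : Matrix (Fin Nt) (Fin T) ℂ)
    (hXH : XH = fun i t => (Real.sqrt ρ : ℂ) * UH i (Fin.castLE hTN t))
    (hXL : XL = fun i t => (Real.sqrt ρ : ℂ) * UL i (Fin.castLE hTN t)) :
    (1 / (Nt : ℝ)) * (RH - RH * XH * (1 + XHᴴ * RH * XH)⁻¹ * XHᴴ * RH).trace.re
      ≤ (1 / (Nt : ℝ)) * (RL - RL * XL * (1 + XLᴴ * RL * XL)⁻¹ * XLᴴ * RL).trace.re
    ∧ ∑ t : Fin T, ρ * lamL (Fin.castLE hTN t) ^ 2 / (ρ * lamL (Fin.castLE hTN t) + 1)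
      ≤ ∑ t : Fin T, ρ * lamH (Fin.castLE hTN t) ^ 2 / (ρ * lamH (Fin.castLE hTN t) + 1) := by
  have hscal := scalar_ineq Nt T hTN ρ hρ lamH lamL hHnn hLnn hHmono hLmono hmaj
  refine ⟨?_, hscal⟩
  have hconvert : ∀ (lam : Fin Nt → ℝ),
      ρ * ∑ t : Fin T, lam (Fin.castLE hTN t) ^ 2 * (ρ * lam (Fin.castLE hTN t) + 1)⁻¹
        = ∑ t : Fin T, ρ * lam (Fin.castLE hTN t) ^ 2 / (ρ * lam (Fin.castLE hTN t) + 1) := by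
    intro lam
    rw [Finset.mul_sum]
    refine Finset.sum_congr rfl fun t _ => ?_
    rw [div_eq_mul_inv]
    ring
  have h1 := trace_key Nt T hTN ρ hρ UH hUH1 lamH hHnn RH hRH XH hXH
  have h2 := trace_key Nt T hTN ρ hρ UL hUL1 lamL hLnn RL hRL XL hXL
  rw [h1, h2, Complex.ofReal_re, Complex.ofReal_re, htrH, htrL,
    hconvert lamH, hconvert lamL]
  apply mul_le_mul_of_nonneg_left _ (by positivity)
  linarith
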